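/- Let H be a complex Hilbert space and let B(H) denote the algebra of bounded linear operators on H with the operator norm. Then the closed unit ball of B(H) satisfies the strong Mankiewicz property: for every normed space Y, every convex subset L ⊆ Y, and every surjective isometry Δ : B_{B(H)} → L, the map Δ is affine, i.e. Δ(t x + (1 − t) y) = t Δ(x) + (1 − t) Δ(y) for all x, y in the closed unit ball of B(H) and all t ∈ [0, 1]. (This is the instance for the JBW*-triple B(H) of the result that the closed unit ball of every JBW*-triple satisfies the strong Mankiewicz property.) -/

import Mathlib

set_option maxHeartbeats 1000000
set_option synthInstance.maxHeartbeats 400000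
set_option linter.unusedSectionVars false

section SMK

open scoped InnerProductSpace

variable {H : Type*} [NormedAddCommGroup H] [InnerProductSpace ℂ H] [CompleteSpace H]
variable {Y : Type*} [NormedAddCommGroup Y] [NormedSpace ℝ Y]

/-- The crucial Hilbert-space pinching fact: if `b` acts as a `β`-scaled isometry and
`w + t•b`, `w - (1-t)•b` are small in operator norm, then `w = 0`. -/
private lemma smk_pinch {w b : H →L[ℂ] H} {β t : ℝ} (ht0 : 0 ≤ t) (ht1 : t ≤ 1)
    (hb : ∀ ξ : H, ‖b ξ‖ = β * ‖ξ‖)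
    (h2 : ‖w + t • b‖ ≤ t * β) (h4 : ‖w - (1 - t) • b‖ ≤ (1 - t) * β) : w = 0 := by
  ext ξ
  set u := w ξ with hu
  set v := b ξ with hvdef
  have hv : ‖v‖ = β * ‖ξ‖ := hb ξ
  have a2 : ‖u + t • v‖ ≤ t * (β * ‖ξ‖) := by
    have : (w + t • b) ξ = u + t • v := by
      simp [ContinuousLinearMap.add_apply, ContinuousLinearMap.smul_apply]
      rfl
    calc ‖u + t • v‖ = ‖(w + t • b) ξ‖ := by rw [this]
      _ ≤ ‖w + t • b‖ * ‖ξ‖ := ContinuousLinearMap.le_opNorm _ ξ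
      _ ≤ t * β * ‖ξ‖ := by
          apply mul_le_mul_of_nonneg_right h2 (norm_nonneg ξ)
      _ = t * (β * ‖ξ‖) := by ring
  have a4 : ‖u - (1 - t) • v‖ ≤ (1 - t) * (β * ‖ξ‖) := by
    have : (w - (1 - t) • b) ξ = u - (1 - t) • v := by
      simp [ContinuousLinearMap.sub_apply, ContinuousLinearMap.smul_apply]
      rfl
    calc ‖u - (1 - t) • v‖ = ‖(w - (1 - t) • b) ξ‖ := by rw [this]
      _ ≤ ‖w - (1 - t) • b‖ * ‖ξ‖ := ContinuousLinearMap.le_opNorm _ ξ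
      _ ≤ (1 - t) * β * ‖ξ‖ := by
          apply mul_le_mul_of_nonneg_right h4 (norm_nonneg ξ)
      _ = (1 - t) * (β * ‖ξ‖) := by ring
  -- expand squares using the inner product
  set R : ℝ := RCLike.re (⟪u, v⟫_ℂ) with hR
  have hsm : ∀ (r : ℝ) (y : H), r • y = (r : ℂ) • y := by
    intro r y
    rw [← algebraMap_smul ℂ r y, Complex.coe_algebraMap]
  have e2 : ‖u + t • v‖ ^ 2 = ‖u‖ ^ 2 + 2 * (t * R) + t ^ 2 * ‖v‖ ^ 2 := by
    have h1 : RCLike.re ⟪u, t • v⟫_ℂ = t * R := by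
      rw [hsm t v, inner_smul_right, ← Complex.real_smul, RCLike.smul_re]
    have hsq : ‖t • v‖ ^ 2 = t ^ 2 * ‖v‖ ^ 2 := by
      rw [norm_smul, Real.norm_eq_abs, mul_pow, sq_abs]
    rw [norm_add_sq (𝕜 := ℂ), h1, hsq]
  have e4 : ‖u - (1 - t) • v‖ ^ 2 = ‖u‖ ^ 2 - 2 * ((1 - t) * R) + (1 - t) ^ 2 * ‖v‖ ^ 2 := by
    have h1 : RCLike.re ⟪u, (1 - t) • v⟫_ℂ = (1 - t) * R := by
      rw [hsm (1 - t) v, inner_smul_right, ← Complex.real_smul, RCLike.smul_re]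
    have hsq : ‖(1 - t) • v‖ ^ 2 = (1 - t) ^ 2 * ‖v‖ ^ 2 := by
      rw [norm_smul, Real.norm_eq_abs, mul_pow, sq_abs]
    rw [norm_sub_sq (𝕜 := ℂ), h1, hsq]
  have q2 : ‖u + t • v‖ ^ 2 ≤ (t * (β * ‖ξ‖)) ^ 2 :=
    pow_le_pow_left₀ (norm_nonneg _) a2 2
  have q4 : ‖u - (1 - t) • v‖ ^ 2 ≤ ((1 - t) * (β * ‖ξ‖)) ^ 2 :=
    pow_le_pow_left₀ (norm_nonneg _) a4 2
  have key2 : ‖u‖ ^ 2 + 2 * (t * R) ≤ 0 := by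
    rw [e2, hv] at q2
    have hring : (t * (β * ‖ξ‖)) ^ 2 = t ^ 2 * (β * ‖ξ‖) ^ 2 := by ring
    rw [hring] at q2
    linarith
  have key4 : ‖u‖ ^ 2 - 2 * ((1 - t) * R) ≤ 0 := by
    rw [e4, hv] at q4
    have hring : ((1 - t) * (β * ‖ξ‖)) ^ 2 = (1 - t) ^ 2 * (β * ‖ξ‖) ^ 2 := by ring
    rw [hring] at q4
    linarith
  have husq : ‖u‖ ^ 2 ≤ 0 := by
    have hc1 : (1 - t) * (‖u‖ ^ 2 + 2 * (t * R)) ≤ 0 :=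
      mul_nonpos_of_nonneg_of_nonpos (by linarith) key2
    have hc2 : t * (‖u‖ ^ 2 - 2 * ((1 - t) * R)) ≤ 0 :=
      mul_nonpos_of_nonneg_of_nonpos ht0 key4
    have hident : (1 - t) * (‖u‖ ^ 2 + 2 * (t * R)) + t * (‖u‖ ^ 2 - 2 * ((1 - t) * R))
        = ‖u‖ ^ 2 := by ring
    linarith
  have hu0 : u = 0 := by
    have h0 : ‖u‖ ≤ 0 := by nlinarith [norm_nonneg u]
    exact norm_le_zero_iff.mp h0
  simpa using hu0

/-- Norm bound for sums over sublists. -/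
private lemma smk_sublist_sum_norm {c : ℝ} (hc : 0 ≤ c) :
    ∀ (l l' : List (H →L[ℂ] H)), List.Sublist l' l → (∀ e ∈ l, ‖e‖ ≤ c) →
      ‖l'.sum‖ ≤ (l.length : ℝ) * c := by
  intro l l' hsub hmem
  have h1 : ∀ (m : List (H →L[ℂ] H)), (∀ e ∈ m, ‖e‖ ≤ c) → ‖m.sum‖ ≤ (m.length : ℝ) * c := by
    intro m
    induction m with
    | nil => intro _; simp
    | cons head tail ih =>
      intro hm
      rw [List.sum_cons]
      calc ‖head + tail.sum‖ ≤ ‖head‖ + ‖tail.sum‖ := norm_add_le _ _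
        _ ≤ c + (tail.length : ℝ) * c := by
            have h1 := hm head List.mem_cons_self
            have h2 := ih (fun e he => hm e (List.mem_cons_of_mem _ he))
            linarith
        _ = ((head :: tail).length : ℝ) * c := by
            simp [List.length_cons]
            ring
  calc ‖l'.sum‖ ≤ (l'.length : ℝ) * c :=
        h1 l' (fun e he => hmem e (hsub.subset he))
    _ ≤ (l.length : ℝ) * c := by
        apply mul_le_mul_of_nonneg_right _ hc
        exact_mod_cast hsub.length_le

section WithMap

variable (L : Set Y) (hL : Convex ℝ L) (Δ : (H →L[ℂ] H) → Y)
variable (hmap : Set.MapsTo Δ (Metric.closedBall (0 : H →L[ℂ] H) 1) L)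
variable (hsurj : Set.SurjOn Δ (Metric.closedBall (0 : H →L[ℂ] H) 1) L)
variable (hiso : ∀ x ∈ Metric.closedBall (0 : H →L[ℂ] H) 1,
      ∀ y ∈ Metric.closedBall (0 : H →L[ℂ] H) 1, ‖Δ x - Δ y‖ = ‖x - y‖)

include hL hmap hsurj hiso in
/-- Key induction: affinity of `Δ` along segments whose difference decomposes as a sum
of scaled isometries, with all corner points inside the ball. -/
private lemma smk_key :
    ∀ (l : List (H →L[ℂ] H)) (x : H →L[ℂ] H),
      (∀ e ∈ l, ∃ β : ℝ, 0 ≤ β ∧ ∀ ξ : H, ‖e ξ‖ = β * ‖ξ‖) →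
      (∀ l' : List (H →L[ℂ] H), List.Sublist l' l → ‖x + l'.sum‖ ≤ 1) →
      ∀ t : ℝ, 0 ≤ t → t ≤ 1 →
        Δ (x + t • l.sum) = Δ x + t • (Δ (x + l.sum) - Δ x) := by
  intro l
  induction l using List.reverseRecOn with
  | nil =>
    intro x _ _ t _ _
    simp
  | append_singleton es b ih =>
    intro x hpieces hball t ht0 ht1
    -- notation
    set S := es.sum with hS
    have hsum : (es ++ [b]).sum = S + b := by simp [hS]
    set y := x + (es ++ [b]).sum with hy
    have hyxb : y = x + (S + b) := by rw [hy, hsum]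
    -- memberships
    have hxB : ‖x‖ ≤ 1 := by simpa using hball [] (List.nil_sublist _)
    have hxSB : ‖x + S‖ ≤ 1 := hball es (List.sublist_append_left es [b])
    have hxbB : ‖x + b‖ ≤ 1 := by
      have := hball [b] (List.sublist_append_right es [b])
      simpa using this
    have hyB : ‖y‖ ≤ 1 := by
      rw [hy]; exact hball (es ++ [b]) (List.Sublist.refl _)
    -- piece data for b
    obtain ⟨β, hβ0, hbiso⟩ := hpieces b (by simp)
    have hbnorm : ‖b‖ ≤ β := by
      apply ContinuousLinearMap.opNorm_le_bound _ hβ0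
      intro ξ; rw [hbiso ξ]
    -- induction hypotheses
    have hes_pieces : ∀ e ∈ es, ∃ β : ℝ, 0 ≤ β ∧ ∀ ξ : H, ‖e ξ‖ = β * ‖ξ‖ :=
      fun e he => hpieces e (by simp [he])
    have IH1 : ∀ τ : ℝ, 0 ≤ τ → τ ≤ 1 →
        Δ (x + τ • S) = Δ x + τ • (Δ (x + S) - Δ x) := by
      intro τ h0 h1
      exact ih x hes_pieces
        (fun l' hl' => hball l' (hl'.trans (List.sublist_append_left es [b]))) τ h0 h1
    have IH2 : ∀ τ : ℝ, 0 ≤ τ → τ ≤ 1 →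
        Δ ((x + b) + τ • S) = Δ (x + b) + τ • (Δ ((x + b) + S) - Δ (x + b)) := by
      intro τ h0 h1
      apply ih (x + b) hes_pieces
      · intro l' hl'
        have hsub : List.Sublist (l' ++ [b]) (es ++ [b]) := hl'.append (List.Sublist.refl [b])
        have := hball (l' ++ [b]) hsub
        have heq : x + (l' ++ [b]).sum = (x + b) + l'.sum := by
          simp only [List.sum_append, List.sum_cons, List.sum_nil, add_zero]
          abel
        rwa [heq] at this
      · exact h0
      · exact h1
    -- the pullback point
    have hxB' : x ∈ Metric.closedBall (0 : H →L[ℂ] H) 1 := by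
      rwa [Metric.mem_closedBall, dist_zero_right]
    have hyB' : y ∈ Metric.closedBall (0 : H →L[ℂ] H) 1 := by
      rwa [Metric.mem_closedBall, dist_zero_right]
    have hq : Δ x + t • (Δ y - Δ x) ∈ L := by
      have hc := hL (hmap hxB') (hmap hyB') (by linarith : (0:ℝ) ≤ 1 - t) ht0 (by ring)
      have : (1 - t) • Δ x + t • Δ y = Δ x + t • (Δ y - Δ x) := by
        simp only [smul_sub, sub_smul, one_smul]; abel
      rwa [this] at hc
    obtain ⟨z, hzB, hzq⟩ := hsurj hq
    have hzB1 : ‖z‖ ≤ 1 := by rwa [Metric.mem_closedBall, dist_zero_right] at hzB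
    -- point P1 = x + t • S  is in the ball (convex combination of x and x + S)
    have hP1B : ‖x + t • S‖ ≤ 1 := by
      have : x + t • S = (1 - t) • x + t • (x + S) := by
        simp only [hS, smul_add, smul_sub, sub_smul, one_smul]; abel
      rw [this]
      calc ‖(1 - t) • x + t • (x + S)‖ ≤ ‖(1 - t) • x‖ + ‖t • (x + S)‖ := norm_add_le _ _
        _ = (1 - t) * ‖x‖ + t * ‖x + S‖ := by
            rw [norm_smul, norm_smul, Real.norm_eq_abs, Real.norm_eq_abs,
              abs_of_nonneg (by linarith : (0:ℝ) ≤ 1 - t), abs_of_nonneg ht0]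
        _ ≤ (1 - t) * 1 + t * 1 := by
            apply add_le_add
            · exact mul_le_mul_of_nonneg_left hxB (by linarith)
            · exact mul_le_mul_of_nonneg_left hxSB ht0
        _ = 1 := by ring
    have hP2B : ‖(x + b) + t • S‖ ≤ 1 := by
      have : (x + b) + t • S = (1 - t) • (x + b) + t • ((x + b) + S) := by
        simp only [hS, smul_add, smul_sub, sub_smul, one_smul]; abel
      rw [this]
      have hxbSB : ‖(x + b) + S‖ ≤ 1 := by
        have : (x + b) + S = y := by rw [hyxb]; abel
        rwa [this]
      calc ‖(1 - t) • (x + b) + t • ((x + b) + S)‖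
          ≤ ‖(1 - t) • (x + b)‖ + ‖t • ((x + b) + S)‖ := norm_add_le _ _
        _ = (1 - t) * ‖x + b‖ + t * ‖(x + b) + S‖ := by
            rw [norm_smul, norm_smul, Real.norm_eq_abs, Real.norm_eq_abs,
              abs_of_nonneg (by linarith : (0:ℝ) ≤ 1 - t), abs_of_nonneg ht0]
        _ ≤ (1 - t) * 1 + t * 1 := by
            apply add_le_add
            · exact mul_le_mul_of_nonneg_left hxbB (by linarith)
            · exact mul_le_mul_of_nonneg_left hxbSB ht0
        _ = 1 := by ring
    have hP1B' : (x + t • S) ∈ Metric.closedBall (0 : H →L[ℂ] H) 1 := by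
      rwa [Metric.mem_closedBall, dist_zero_right]
    have hP2B' : ((x + b) + t • S) ∈ Metric.closedBall (0 : H →L[ℂ] H) 1 := by
      rwa [Metric.mem_closedBall, dist_zero_right]
    have hxSB' : (x + S) ∈ Metric.closedBall (0 : H →L[ℂ] H) 1 := by
      rwa [Metric.mem_closedBall, dist_zero_right]
    have hxbB' : (x + b) ∈ Metric.closedBall (0 : H →L[ℂ] H) 1 := by
      rwa [Metric.mem_closedBall, dist_zero_right]
    -- condition (2)
    set w := z - (x + t • (S + b)) with hw
    have hcond2 : ‖w + t • b‖ ≤ t * β := by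
      have hwtb : w + t • b = z - (x + t • S) := by
        rw [hw]; simp only [hS, smul_add]; abel
      rw [hwtb]
      have hd : ‖z - (x + t • S)‖ = ‖Δ z - Δ (x + t • S)‖ := (hiso _ hzB _ hP1B').symm
      rw [hd, hzq, IH1 t ht0 ht1]
      have : Δ x + t • (Δ y - Δ x) - (Δ x + t • (Δ (x + S) - Δ x))
          = t • (Δ y - Δ (x + S)) := by
        simp only [smul_sub]; abel
      rw [this, norm_smul, Real.norm_eq_abs, abs_of_nonneg ht0]
      have hyx : ‖Δ y - Δ (x + S)‖ = ‖y - (x + S)‖ := hiso _ hyB' _ hxSB'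
      rw [hyx]
      have : y - (x + S) = b := by rw [hyxb]; abel
      rw [this]
      exact mul_le_mul_of_nonneg_left hbnorm ht0
    -- condition (4)
    have hcond4 : ‖w - (1 - t) • b‖ ≤ (1 - t) * β := by
      have hwtb : w - (1 - t) • b = z - ((x + b) + t • S) := by
        rw [hw]; simp only [hS, smul_add, smul_sub, sub_smul, one_smul]; abel
      rw [hwtb]
      have hd : ‖z - ((x + b) + t • S)‖ = ‖Δ z - Δ ((x + b) + t • S)‖ :=
        (hiso _ hzB _ hP2B').symm
      rw [hd, hzq, IH2 t ht0 ht1]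
      have hxbS : (x + b) + S = y := by rw [hyxb]; abel
      rw [hxbS]
      have : Δ x + t • (Δ y - Δ x) - (Δ (x + b) + t • (Δ y - Δ (x + b)))
          = (1 - t) • (Δ x - Δ (x + b)) := by
        simp only [smul_sub, sub_smul, one_smul]; abel
      rw [this, norm_smul, Real.norm_eq_abs, abs_of_nonneg (by linarith : (0:ℝ) ≤ 1 - t)]
      have hxx : ‖Δ x - Δ (x + b)‖ = ‖x - (x + b)‖ := hiso _ hxB' _ hxbB'
      rw [hxx]
      have : x - (x + b) = -b := by abel
      rw [this, norm_neg]
      exact mul_le_mul_of_nonneg_left hbnorm (by linarith)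
    -- pinch
    have hw0 : w = 0 := smk_pinch ht0 ht1 hbiso hcond2 hcond4
    have hzeq : z = x + t • (S + b) := by
      have := sub_eq_zero.mp hw0
      exact this
    have hgoal : x + t • (es ++ [b]).sum = z := by rw [hsum, ← hzeq]
    rw [hgoal, hzq]

end WithMap

/-- Every selfadjoint operator is the sum of two scaled isometries. -/
private lemma smk_sa_piece (s : H →L[ℂ] H) (hs : IsSelfAdjoint s) :
    ∃ e e' : H →L[ℂ] H, e + e' = s ∧
      (∀ ξ : H, ‖e ξ‖ = (‖s‖ / 2) * ‖ξ‖) ∧ (∀ ξ : H, ‖e' ξ‖ = (‖s‖ / 2) * ‖ξ‖) := by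
  rcases subsingleton_or_nontrivial H with hH | hH
  · refine ⟨0, 0, ?_, ?_, ?_⟩
    · have h0 : s = 0 := Subsingleton.elim _ _
      rw [h0, add_zero]
    · intro ξ
      have h0 : ξ = 0 := Subsingleton.elim _ _
      simp [h0]
    · intro ξ
      have h0 : ξ = 0 := Subsingleton.elim _ _
      simp [h0]
  · set f : ℝ → ℝ := fun τ => Real.sqrt (‖s‖ ^ 2 - τ ^ 2) with hfdef
    have hfc : ContinuousOn f (spectrum ℝ s) := by
      apply Continuous.continuousOn
      exact Real.continuous_sqrt.comp (by continuity)
    set r := cfc f s with hrdef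
    have hrsa : IsSelfAdjoint r := cfc_predicate f s
    have hspec : ∀ τ ∈ spectrum ℝ s, 0 ≤ ‖s‖ ^ 2 - τ ^ 2 := by
      intro τ hτ
      have h1 : ‖τ‖ ≤ ‖s‖ := spectrum.norm_le_norm_of_mem hτ
      rw [Real.norm_eq_abs] at h1
      nlinarith [abs_nonneg τ, sq_abs τ]
    have hrr : r * r = algebraMap ℝ (H →L[ℂ] H) (‖s‖ ^ 2) - s * s := by
      calc r * r = cfc (fun τ => f τ * f τ) s := (cfc_mul f f s hfc hfc).symm
        _ = cfc (fun τ : ℝ => ‖s‖ ^ 2 - τ ^ 2) s := by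
            apply cfc_congr
            intro τ hτ
            exact Real.mul_self_sqrt (hspec τ hτ)
        _ = cfc (fun τ : ℝ => (fun _ : ℝ => ‖s‖ ^ 2) τ - (fun τ : ℝ => τ ^ 2) τ) s := rfl
        _ = cfc (fun _ : ℝ => ‖s‖ ^ 2) s - cfc (fun τ : ℝ => τ ^ 2) s :=
            cfc_sub _ _ _ (by fun_prop) (by fun_prop)
        _ = algebraMap ℝ (H →L[ℂ] H) (‖s‖ ^ 2) - s * s := by
            rw [cfc_const _ _ hs, cfc_pow_id s 2 hs, ← sq]
    have hcomm : s * r = r * s := by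
      have h1 : cfc (fun τ : ℝ => τ) s = s := cfc_id' ℝ s hs
      calc s * r = cfc (fun τ : ℝ => τ) s * cfc f s := by rw [h1]
        _ = cfc (fun τ : ℝ => τ * f τ) s := (cfc_mul _ f s (by fun_prop) hfc).symm
        _ = cfc (fun τ : ℝ => f τ * τ) s := by
            apply cfc_congr; intro τ _; ring
        _ = cfc f s * cfc (fun τ : ℝ => τ) s := cfc_mul f _ s hfc (by fun_prop)
        _ = r * s := by rw [h1]
    have hssym := ContinuousLinearMap.isSelfAdjoint_iff_isSymmetric.mp hs
    have hrsym := ContinuousLinearMap.isSelfAdjoint_iff_isSymmetric.mp hrsa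
    have hreal : ∀ ξ : H, (⟪s ξ, r ξ⟫_ℂ).im = 0 := by
      intro ξ
      have h1 : (starRingEnd ℂ) ⟪s ξ, r ξ⟫_ℂ = ⟪r ξ, s ξ⟫_ℂ := inner_conj_symm _ _
      have h2 : ⟪r ξ, s ξ⟫_ℂ = ⟪ξ, r (s ξ)⟫_ℂ := hrsym ξ (s ξ)
      have h3 : ⟪s ξ, r ξ⟫_ℂ = ⟪ξ, s (r ξ)⟫_ℂ := hssym ξ (r ξ)
      have h4 : r (s ξ) = s (r ξ) := by
        have h5 := congrArg (fun T : H →L[ℂ] H => T ξ) hcomm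
        simpa [ContinuousLinearMap.mul_apply] using h5.symm
      have h5 : (starRingEnd ℂ) ⟪s ξ, r ξ⟫_ℂ = ⟪s ξ, r ξ⟫_ℂ := by
        rw [h1, h2, h4, ← h3]
      exact Complex.conj_eq_iff_im.mp h5
    have hkey : ∀ (σ : ℝ) (ξ : H), ‖s ξ + σ • Complex.I • r ξ‖ ^ 2
        = ‖s ξ‖ ^ 2 + σ ^ 2 * ‖r ξ‖ ^ 2 := by
      intro σ ξ
      have hcross : RCLike.re ⟪s ξ, σ • Complex.I • r ξ⟫_ℂ = 0 := by
        have h1 : ⟪s ξ, σ • Complex.I • r ξ⟫_ℂ = σ • (Complex.I * ⟪s ξ, r ξ⟫_ℂ) := by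
          rw [← algebraMap_smul ℂ σ (Complex.I • r ξ), Complex.coe_algebraMap,
            inner_smul_right, inner_smul_right, Complex.real_smul]
        rw [h1, RCLike.smul_re]
        have h2 : RCLike.re (Complex.I * ⟪s ξ, r ξ⟫_ℂ) = 0 := by
          rw [RCLike.re_to_complex, Complex.mul_re, Complex.I_re, Complex.I_im, hreal ξ]
          ring
        rw [h2, mul_zero]
      have hns : ‖σ • Complex.I • r ξ‖ ^ 2 = σ ^ 2 * ‖r ξ‖ ^ 2 := by
        rw [norm_smul, norm_smul, Complex.norm_I, one_mul, Real.norm_eq_abs,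
          mul_pow, sq_abs]
      rw [norm_add_sq (𝕜 := ℂ), hcross, hns]
      ring
    have hsum : ∀ ξ : H, ‖s ξ‖ ^ 2 + ‖r ξ‖ ^ 2 = ‖s‖ ^ 2 * ‖ξ‖ ^ 2 := by
      intro ξ
      have h1 : ‖s ξ‖ ^ 2 = RCLike.re ⟪ξ, s (s ξ)⟫_ℂ := by
        have ha : ⟪s ξ, s ξ⟫_ℂ = ⟪ξ, s (s ξ)⟫_ℂ := hssym ξ (s ξ)
        rw [← ha, inner_self_eq_norm_sq]
      have h2 : ‖r ξ‖ ^ 2 = RCLike.re ⟪ξ, r (r ξ)⟫_ℂ := by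
        have ha : ⟪r ξ, r ξ⟫_ℂ = ⟪ξ, r (r ξ)⟫_ℂ := hrsym ξ (r ξ)
        rw [← ha, inner_self_eq_norm_sq]
      have h3 : s (s ξ) + r (r ξ) = (‖s‖ ^ 2 : ℝ) • ξ := by
        have h4 : s * s + r * r = algebraMap ℝ (H →L[ℂ] H) (‖s‖ ^ 2) := by
          rw [hrr]; abel
        have h5 := congrArg (fun T : H →L[ℂ] H => T ξ) h4
        simp only [ContinuousLinearMap.add_apply, ContinuousLinearMap.mul_apply] at h5
        rw [h5, Algebra.algebraMap_eq_smul_one]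
        simp
      have h6 : ⟪ξ, s (s ξ)⟫_ℂ + ⟪ξ, r (r ξ)⟫_ℂ = ⟪ξ, (‖s‖ ^ 2 : ℝ) • ξ⟫_ℂ := by
        rw [← inner_add_right, h3]
      have h7 : RCLike.re ⟪ξ, (‖s‖ ^ 2 : ℝ) • ξ⟫_ℂ = ‖s‖ ^ 2 * ‖ξ‖ ^ 2 := by
        rw [← algebraMap_smul ℂ (‖s‖ ^ 2) ξ, Complex.coe_algebraMap, inner_smul_right,
          ← Complex.real_smul, RCLike.smul_re, inner_self_eq_norm_sq]
      rw [h1, h2, ← map_add, h6, h7]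
    have hkey2 : ∀ (σ : ℝ) (ξ : H), σ ^ 2 = 1 →
        ‖s ξ + σ • Complex.I • r ξ‖ = ‖s‖ * ‖ξ‖ := by
      intro σ ξ hσ
      have h1 : ‖s ξ + σ • Complex.I • r ξ‖ ^ 2 = (‖s‖ * ‖ξ‖) ^ 2 := by
        rw [hkey σ ξ, hσ, one_mul, hsum ξ]; ring
      have h2 : (0:ℝ) ≤ ‖s ξ + σ • Complex.I • r ξ‖ := norm_nonneg _
      have h3 : (0:ℝ) ≤ ‖s‖ * ‖ξ‖ := by positivity
      nlinarith [h1, h2, h3]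
    refine ⟨(1 / 2 : ℝ) • (s + Complex.I • r), (1 / 2 : ℝ) • (s - Complex.I • r), ?_, ?_, ?_⟩
    · rw [← smul_add]
      have h1 : s + Complex.I • r + (s - Complex.I • r) = (2 : ℝ) • s := by
        rw [two_smul]; abel
      rw [h1, smul_smul]
      norm_num
    · intro ξ
      have h1 : ((1 / 2 : ℝ) • (s + Complex.I • r)) ξ
          = (1 / 2 : ℝ) • (s ξ + (1:ℝ) • Complex.I • r ξ) := by
        simp [ContinuousLinearMap.add_apply, ContinuousLinearMap.smul_apply]
      rw [h1, norm_smul, Real.norm_eq_abs, hkey2 1 ξ (by norm_num),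
        abs_of_nonneg (by norm_num : (0:ℝ) ≤ (1/2:ℝ))]
      ring
    · intro ξ
      have h1 : ((1 / 2 : ℝ) • (s - Complex.I • r)) ξ
          = (1 / 2 : ℝ) • (s ξ + (-1 : ℝ) • Complex.I • r ξ) := by
        simp [ContinuousLinearMap.sub_apply, ContinuousLinearMap.smul_apply, sub_eq_add_neg]
      rw [h1, norm_smul, Real.norm_eq_abs, hkey2 (-1) ξ (by norm_num),
        abs_of_nonneg (by norm_num : (0:ℝ) ≤ (1/2:ℝ))]
      ring

/-- Every operator decomposes as a sum of four scaled isometries with controlled norms. -/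
private lemma smk_decomp (a : H →L[ℂ] H) :
    ∃ l : List (H →L[ℂ] H), l.sum = a ∧
      (∀ e ∈ l, ∃ β : ℝ, 0 ≤ β ∧ ∀ ξ : H, ‖e ξ‖ = β * ‖ξ‖) ∧
      (∀ l' : List (H →L[ℂ] H), List.Sublist l' l → ‖l'.sum‖ ≤ 2 * ‖a‖) := by
  set c : ℂ := ((1 / 2 : ℝ) : ℂ) with hcdef
  set s1 : H →L[ℂ] H := c • (a + star a) with hs1def
  set s2 : H →L[ℂ] H := c • (Complex.I • (star a - a)) with hs2def
  have hcconj : star c = c := Complex.conj_ofReal _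
  have hIconj : star Complex.I = -Complex.I := by
    rw [Complex.star_def, Complex.conj_I]
  have hsa1 : IsSelfAdjoint s1 := by
    rw [hs1def, IsSelfAdjoint, star_smul, star_add, star_star, hcconj,
      add_comm (star a) a]
  have hsa2 : IsSelfAdjoint s2 := by
    rw [hs2def, IsSelfAdjoint, star_smul, star_smul, star_sub, star_star, hcconj, hIconj]
    congr 1
    rw [neg_smul, ← smul_neg, neg_sub]
  have hadd : s1 + Complex.I • s2 = a := by
    rw [hs1def, hs2def]
    rw [smul_comm Complex.I c]
    rw [smul_smul Complex.I Complex.I, Complex.I_mul_I, neg_one_smul, neg_sub]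
    rw [← smul_add]
    have h1 : a + star a + (a - star a) = (2:ℂ) • a := by
      rw [two_smul]; abel
    rw [h1, smul_smul, hcdef]
    norm_num
  have hcnorm : ‖c‖ = 1/2 := by
    rw [hcdef, Complex.norm_real, Real.norm_eq_abs]
    norm_num
  have hn1 : ‖s1‖ ≤ ‖a‖ := by
    rw [hs1def, norm_smul, hcnorm]
    have h1 : ‖a + star a‖ ≤ 2 * ‖a‖ := by
      calc ‖a + star a‖ ≤ ‖a‖ + ‖star a‖ := norm_add_le _ _
        _ = 2 * ‖a‖ := by rw [norm_star]; ring
    linarith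
  have hn2 : ‖s2‖ ≤ ‖a‖ := by
    rw [hs2def, norm_smul, hcnorm, norm_smul, Complex.norm_I, one_mul]
    have h1 : ‖star a - a‖ ≤ 2 * ‖a‖ := by
      calc ‖star a - a‖ ≤ ‖star a‖ + ‖a‖ := norm_sub_le _ _
        _ = 2 * ‖a‖ := by rw [norm_star]; ring
    linarith
  obtain ⟨e1, e1', he1, hp1, hp1'⟩ := smk_sa_piece s1 hsa1
  obtain ⟨e2, e2', he2, hp2, hp2'⟩ := smk_sa_piece s2 hsa2
  refine ⟨[e1, e1', Complex.I • e2, Complex.I • e2'], ?_, ?_, ?_⟩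
  · have h1 : [e1, e1', Complex.I • e2, Complex.I • e2'].sum
        = (e1 + e1') + Complex.I • (e2 + e2') := by
      simp only [List.sum_cons, List.sum_nil, add_zero, smul_add]
      abel
    rw [h1, he1, he2, hadd]
  · intro e he
    simp only [List.mem_cons, List.not_mem_nil, or_false] at he
    rcases he with h | h | h | h
    · exact ⟨‖s1‖ / 2, by positivity, by rw [h]; exact hp1⟩
    · exact ⟨‖s1‖ / 2, by positivity, by rw [h]; exact hp1'⟩
    · refine ⟨‖s2‖ / 2, by positivity, ?_⟩
      intro ξ
      rw [h, ContinuousLinearMap.smul_apply, norm_smul, Complex.norm_I, one_mul]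
      exact hp2 ξ
    · refine ⟨‖s2‖ / 2, by positivity, ?_⟩
      intro ξ
      rw [h, ContinuousLinearMap.smul_apply, norm_smul, Complex.norm_I, one_mul]
      exact hp2' ξ
  · intro l' hsub
    have hbound : ∀ e ∈ [e1, e1', Complex.I • e2, Complex.I • e2'], ‖e‖ ≤ ‖a‖ / 2 := by
      intro e he
      simp only [List.mem_cons, List.not_mem_nil, or_false] at he
      have hgen : ∀ (T : H →L[ℂ] H) (β : ℝ), 0 ≤ β → β ≤ ‖a‖ / 2 →
          (∀ ξ : H, ‖T ξ‖ = β * ‖ξ‖) → ‖T‖ ≤ ‖a‖ / 2 := by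
        intro T β hβ0 hβa hT
        apply ContinuousLinearMap.opNorm_le_bound _ (by positivity)
        intro ξ
        rw [hT ξ]
        exact mul_le_mul_of_nonneg_right hβa (norm_nonneg ξ)
      rcases he with h | h | h | h
      · exact hgen e (‖s1‖/2) (by positivity) (by linarith) (by rw [h]; exact hp1)
      · exact hgen e (‖s1‖/2) (by positivity) (by linarith) (by rw [h]; exact hp1')
      · refine hgen e (‖s2‖/2) (by positivity) (by linarith) ?_
        intro ξ
        rw [h, ContinuousLinearMap.smul_apply, norm_smul, Complex.norm_I, one_mul]
        exact hp2 ξ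
      · refine hgen e (‖s2‖/2) (by positivity) (by linarith) ?_
        intro ξ
        rw [h, ContinuousLinearMap.smul_apply, norm_smul, Complex.norm_I, one_mul]
        exact hp2' ξ
    have h1 := smk_sublist_sum_norm (by positivity : (0:ℝ) ≤ ‖a‖ / 2)
      [e1, e1', Complex.I • e2, Complex.I • e2'] l' hsub hbound
    have h2 : ([e1, e1', Complex.I • e2, Complex.I • e2'].length : ℝ) * (‖a‖ / 2)
        = 2 * ‖a‖ := by
      simp only [List.length_cons, List.length_nil]
      norm_num
      ring
    rw [h2] at h1
    exact h1

section WithMap2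

variable (L : Set Y) (hL : Convex ℝ L) (Δ : (H →L[ℂ] H) → Y)
variable (hmap : Set.MapsTo Δ (Metric.closedBall (0 : H →L[ℂ] H) 1) L)
variable (hsurj : Set.SurjOn Δ (Metric.closedBall (0 : H →L[ℂ] H) 1) L)
variable (hiso : ∀ x ∈ Metric.closedBall (0 : H →L[ℂ] H) 1,
      ∀ y ∈ Metric.closedBall (0 : H →L[ℂ] H) 1, ‖Δ x - Δ y‖ = ‖x - y‖)

include hL hmap hsurj hiso in
/-- Local affinity: `Δ` is affine on segments which stay well inside the ball. -/
private lemma smk_local (x y : H →L[ℂ] H) (hxy : ‖x‖ + 2 * ‖y - x‖ ≤ 1) :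
    ∀ t : ℝ, 0 ≤ t → t ≤ 1 → Δ (x + t • (y - x)) = Δ x + t • (Δ y - Δ x) := by
  obtain ⟨l, hsum, hpieces, hsub⟩ := smk_decomp (y - x)
  have hball : ∀ l' : List (H →L[ℂ] H), List.Sublist l' l → ‖x + l'.sum‖ ≤ 1 := by
    intro l' h
    calc ‖x + l'.sum‖ ≤ ‖x‖ + ‖l'.sum‖ := norm_add_le _ _
      _ ≤ ‖x‖ + 2 * ‖y - x‖ := by linarith [hsub l' h]
      _ ≤ 1 := hxy
  intro t ht0 ht1
  have h := smk_key L hL Δ hmap hsurj hiso l x hpieces hball t ht0 ht1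
  rw [hsum] at h
  rw [show x + (y - x) = y from by abel] at h
  exact h

end WithMap2

/-- Pure gluing lemma on the real interval. -/
private lemma smk_grid {E : Type*} [AddCommGroup E] [Module ℝ E] (g : ℝ → E) (n : ℕ)
    (hn : 0 < n)
    (h : ∀ s t : ℝ, 0 ≤ s → s ≤ t → t ≤ 1 → t - s ≤ 2 / n →
      ∀ τ : ℝ, 0 ≤ τ → τ ≤ 1 → g (s + τ * (t - s)) = g s + τ • (g t - g s)) :
    ∀ t : ℝ, 0 ≤ t → t ≤ 1 → g t = g 0 + t • (g 1 - g 0) := by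
  have hn' : (0:ℝ) < n := by exact_mod_cast hn
  set V : E := (n : ℝ) • (g (1 / n) - g 0) with hV
  have claim : ∀ j : ℕ, j ≤ n → ∀ t : ℝ, 0 ≤ t → t ≤ (j:ℝ) / n → g t = g 0 + t • V := by
    intro j
    induction j with
    | zero =>
      intro _ t ht0 ht1
      have h0 : t = 0 := le_antisymm (by simpa using ht1) ht0
      simp [h0]
    | succ j ih =>
      intro hj t ht0 ht1
      by_cases hcase : t ≤ (j:ℝ) / n
      · exact ih (Nat.le_of_succ_le hj) t ht0 hcase
      push_neg at hcase
      have htj1 : t ≤ ((j:ℝ) + 1) / n := by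
        have : ((j:ℝ) + 1) = ((j + 1 : ℕ) : ℝ) := by push_cast; ring
        rw [this]; exact ht1
      have hjn : ((j:ℝ) + 1) ≤ (n:ℝ) := by exact_mod_cast hj
      have htle1 : t ≤ 1 := by
        calc t ≤ ((j:ℝ) + 1) / n := htj1
          _ ≤ (n:ℝ) / n := (div_le_div_iff_of_pos_right hn').mpr hjn
          _ = 1 := div_self (ne_of_gt hn')
      rcases Nat.eq_zero_or_pos j with hj0 | hjpos
      · subst hj0
        have ht1' : t ≤ 1 / n := by simpa using htj1
        have hτle : t * n ≤ 1 := by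
          rw [← le_div_iff₀ hn'] at *
          exact ht1'
        have hw := h 0 (1/n) le_rfl (by positivity)
          (by rw [div_le_one hn']; exact_mod_cast hn)
          (by rw [sub_zero]; apply (div_le_div_iff_of_pos_right hn').mpr; norm_num)
          (t * n) (by positivity) hτle
        have harg : (0:ℝ) + (t * n) * (1/n - 0) = t := by
          field_simp
          ring
        rw [harg] at hw
        rw [hw, hV, ← mul_smul]
      · set q : ℝ := (j:ℝ) / n with hq
        have hq0 : 0 < q := div_pos (by exact_mod_cast hjpos) hn'
        set s1 : ℝ := max (t - 2 / n) 0 with hs1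
        have hs10 : 0 ≤ s1 := le_max_right _ _
        have hs1q : s1 < q := by
          rw [hs1]
          apply max_lt
          · have h1 : ((j:ℝ) + 1) / n - 2/n < q := by
              rw [hq, div_sub_div_same]
              apply (div_lt_div_iff_of_pos_right hn').mpr
              linarith
            linarith
          · exact hq0
        have hqt : q < t := hcase
        have hs1t : s1 < t := hs1q.trans hqt
        have hts1 : t - s1 ≤ 2 / n := by
          have := le_max_left (t - 2/n) 0
          rw [hs1]
          linarith [le_max_left (t - 2/n) (0:ℝ)]
        have hden : (0:ℝ) < t - s1 := sub_pos.mpr hs1t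
        have hnum : (0:ℝ) < q - s1 := sub_pos.mpr hs1q
        set τ0 : ℝ := (q - s1) / (t - s1) with hτ0
        have hτ0pos : 0 < τ0 := div_pos hnum hden
        have hτ01 : τ0 ≤ 1 := by
          rw [hτ0, div_le_one hden]
          linarith
        have hw := h s1 t hs10 hs1t.le htle1 hts1 τ0 hτ0pos.le hτ01
        have harg : s1 + τ0 * (t - s1) = q := by
          rw [hτ0, div_mul_cancel₀ _ (ne_of_gt hden)]
          ring
        rw [harg] at hw
        have hgq : g q = g 0 + q • V := ih (Nat.le_of_succ_le hj) q hq0.le le_rfl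
        have hgs1 : g s1 = g 0 + s1 • V :=
          ih (Nat.le_of_succ_le hj) s1 hs10 hs1q.le
        have h5 : g q - g s1 = τ0 • (g t - g s1) := by rw [hw]; abel
        have h6 : g t - g s1 = τ0⁻¹ • (g q - g s1) := by
          rw [h5, smul_smul, inv_mul_cancel₀ (ne_of_gt hτ0pos), one_smul]
        have h7 : g t = g s1 + (g t - g s1) := by abel
        rw [h7, h6, hgq, hgs1]
        have h8 : g 0 + q • V - (g 0 + s1 • V) = (q - s1) • V := by
          rw [sub_smul]; abel
        rw [h8, smul_smul τ0⁻¹ (q - s1) V]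
        have h9 : τ0⁻¹ * (q - s1) = t - s1 := by
          rw [hτ0, inv_div, div_mul_cancel₀ _ (ne_of_gt hnum)]
        rw [h9, sub_smul]
        abel
  intro t ht0 ht1
  have hnn : (n:ℝ)/n = 1 := div_self (ne_of_gt hn')
  have h1 := claim n le_rfl t ht0 (by rw [hnn]; exact ht1)
  have h2 := claim n le_rfl 1 zero_le_one (by rw [hnn])
  have hVval : V = g 1 - g 0 := by rw [h2, one_smul]; abel
  rw [h1, hVval]

section WithMap3

variable (L : Set Y) (hL : Convex ℝ L) (Δ : (H →L[ℂ] H) → Y)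
variable (hmap : Set.MapsTo Δ (Metric.closedBall (0 : H →L[ℂ] H) 1) L)
variable (hsurj : Set.SurjOn Δ (Metric.closedBall (0 : H →L[ℂ] H) 1) L)
variable (hiso : ∀ x ∈ Metric.closedBall (0 : H →L[ℂ] H) 1,
      ∀ y ∈ Metric.closedBall (0 : H →L[ℂ] H) 1, ‖Δ x - Δ y‖ = ‖x - y‖)

include hL hmap hsurj hiso in
/-- Affinity for interior pairs. -/
private lemma smk_interior (x y : H →L[ℂ] H) (ε : ℝ) (hε : 0 < ε)
    (hx : ‖x‖ ≤ 1 - ε) (hy : ‖y‖ ≤ 1 - ε) :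
    ∀ t : ℝ, 0 ≤ t → t ≤ 1 → Δ (x + t • (y - x)) = Δ x + t • (Δ y - Δ x) := by
  obtain ⟨n0, hn0⟩ := exists_nat_ge (4 * ‖y - x‖ / ε)
  set n := n0 + 1 with hn
  have hnpos : 0 < n := Nat.succ_pos _
  have hn' : (0:ℝ) < n := by exact_mod_cast hnpos
  have hwin : 4 * ‖y - x‖ / (n:ℝ) ≤ ε := by
    rw [div_le_iff₀ hn']
    have h1 : 4 * ‖y - x‖ / ε ≤ (n:ℝ) := by
      calc 4 * ‖y - x‖ / ε ≤ (n0:ℝ) := hn0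
        _ ≤ (n:ℝ) := by exact_mod_cast Nat.le_succ n0
    calc 4 * ‖y - x‖ = (4 * ‖y - x‖ / ε) * ε := by field_simp
      _ ≤ (n:ℝ) * ε := mul_le_mul_of_nonneg_right h1 hε.le
      _ = ε * n := by ring
  have hwindows : ∀ s t : ℝ, 0 ≤ s → s ≤ t → t ≤ 1 → t - s ≤ 2 / n →
      ∀ τ : ℝ, 0 ≤ τ → τ ≤ 1 →
        Δ (x + (s + τ * (t - s)) • (y - x))
          = Δ (x + s • (y - x)) + τ • (Δ (x + t • (y - x)) - Δ (x + s • (y - x))) := by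
    intro s t hs0 hst ht1 hwidth τ hτ0 hτ1
    have hxs : ‖x + s • (y - x)‖ ≤ 1 - ε := by
      have hrepr : x + s • (y - x) = (1 - s) • x + s • y := by
        simp only [smul_sub, sub_smul, one_smul]; abel
      rw [hrepr]
      have hs1 : s ≤ 1 := le_trans hst ht1
      calc ‖(1 - s) • x + s • y‖ ≤ ‖(1 - s) • x‖ + ‖s • y‖ := norm_add_le _ _
        _ = (1 - s) * ‖x‖ + s * ‖y‖ := by
            rw [norm_smul, norm_smul, Real.norm_eq_abs, Real.norm_eq_abs,
              abs_of_nonneg (by linarith : (0:ℝ) ≤ 1 - s), abs_of_nonneg hs0]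
        _ ≤ (1 - s) * (1 - ε) + s * (1 - ε) := by
            apply add_le_add
            · exact mul_le_mul_of_nonneg_left hx (by linarith)
            · exact mul_le_mul_of_nonneg_left hy hs0
        _ = 1 - ε := by ring
    have hdiff : (x + t • (y - x)) - (x + s • (y - x)) = (t - s) • (y - x) := by
      rw [sub_smul]; abel
    have hcond : ‖x + s • (y - x)‖
        + 2 * ‖(x + t • (y - x)) - (x + s • (y - x))‖ ≤ 1 := by
      rw [hdiff, norm_smul, Real.norm_eq_abs,
        abs_of_nonneg (by linarith : (0:ℝ) ≤ t - s)]
      have h2 : (t - s) * ‖y - x‖ ≤ (2 / (n:ℝ)) * ‖y - x‖ :=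
        mul_le_mul_of_nonneg_right hwidth (norm_nonneg _)
      have h3 : 2 * ((2 / (n:ℝ)) * ‖y - x‖) = 4 * ‖y - x‖ / n := by ring
      linarith
    have hloc := smk_local L hL Δ hmap hsurj hiso (x + s • (y - x)) (x + t • (y - x))
      hcond τ hτ0 hτ1
    rw [hdiff] at hloc
    have harg : (x + s • (y - x)) + τ • (t - s) • (y - x)
        = x + (s + τ * (t - s)) • (y - x) := by
      rw [smul_smul, add_smul]; abel
    rw [harg] at hloc
    exact hloc
  have hgrid := smk_grid (fun τ : ℝ => Δ (x + τ • (y - x))) n hnpos hwindows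
  intro t ht0 ht1
  have h := hgrid t ht0 ht1
  rw [show x + (0:ℝ) • (y - x) = x from by simp,
    show x + (1:ℝ) • (y - x) = y from by rw [one_smul]; abel] at h
  exact h

include hL hmap hsurj hiso in
/-- Affinity on the full closed ball. -/
private lemma smk_full (x y : H →L[ℂ] H) (hx : ‖x‖ ≤ 1) (hy : ‖y‖ ≤ 1) :
    ∀ t : ℝ, 0 ≤ t → t ≤ 1 → Δ (x + t • (y - x)) = Δ x + t • (Δ y - Δ x) := by
  intro t ht0 ht1
  set p := x + t • (y - x) with hp
  have hpnorm : ‖p‖ ≤ 1 := by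
    have hrepr : p = (1 - t) • x + t • y := by
      rw [hp]; simp only [smul_sub, sub_smul, one_smul]; abel
    rw [hrepr]
    calc ‖(1 - t) • x + t • y‖ ≤ ‖(1 - t) • x‖ + ‖t • y‖ := norm_add_le _ _
      _ = (1 - t) * ‖x‖ + t * ‖y‖ := by
          rw [norm_smul, norm_smul, Real.norm_eq_abs, Real.norm_eq_abs,
            abs_of_nonneg (by linarith : (0:ℝ) ≤ 1 - t), abs_of_nonneg ht0]
      _ ≤ (1 - t) * 1 + t * 1 := by
          apply add_le_add
          · exact mul_le_mul_of_nonneg_left hx (by linarith)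
          · exact mul_le_mul_of_nonneg_left hy ht0
      _ = 1 := by ring
  have hmem : ∀ v : H →L[ℂ] H, ‖v‖ ≤ 1 → v ∈ Metric.closedBall (0 : H →L[ℂ] H) 1 := by
    intro v hv
    rwa [Metric.mem_closedBall, dist_zero_right]
  have happrox : ∀ s : ℝ, 0 < s → s ≤ 1 →
      ‖Δ p - (Δ x + t • (Δ y - Δ x))‖ ≤ 4 * s := by
    intro s hs0 hs1
    have hshr : ∀ v : H →L[ℂ] H, ‖v‖ ≤ 1 → ‖(1 - s) • v‖ ≤ 1 - s := by
      intro v hv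
      rw [norm_smul, Real.norm_eq_abs, abs_of_nonneg (by linarith : (0:ℝ) ≤ 1 - s)]
      calc (1 - s) * ‖v‖ ≤ (1 - s) * 1 := mul_le_mul_of_nonneg_left hv (by linarith)
        _ = 1 - s := by ring
    have haff := smk_interior L hL Δ hmap hsurj hiso ((1 - s) • x) ((1 - s) • y) s hs0
      (hshr x hx) (hshr y hy) t ht0 ht1
    have hpt : (1 - s) • x + t • ((1 - s) • y - (1 - s) • x) = (1 - s) • p := by
      rw [hp]
      simp only [smul_sub, smul_add, smul_smul]
      rw [mul_comm t (1 - s)]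
    rw [hpt] at haff
    have hd1 : ‖Δ p - Δ ((1 - s) • p)‖ ≤ s := by
      rw [hiso _ (hmem p hpnorm) _ (hmem _ (by
        have := hshr p hpnorm
        linarith))]
      have h1 : p - (1 - s) • p = s • p := by
        have h2 : p = (1:ℝ) • p := (one_smul ℝ p).symm
        calc p - (1 - s) • p = (1:ℝ) • p - (1 - s) • p := by rw [← h2]
          _ = ((1:ℝ) - (1 - s)) • p := (sub_smul _ _ _).symm
          _ = s • p := by norm_num
      rw [h1, norm_smul, Real.norm_eq_abs, abs_of_nonneg hs0.le]
      calc s * ‖p‖ ≤ s * 1 := mul_le_mul_of_nonneg_left hpnorm hs0.le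
        _ = s := by ring
    have hd2 : ‖Δ ((1 - s) • x) - Δ x‖ ≤ s := by
      rw [hiso _ (hmem _ (by have := hshr x hx; linarith)) _ (hmem x hx)]
      have h1 : (1 - s) • x - x = (-s) • x := by
        have h2 : x = (1:ℝ) • x := (one_smul ℝ x).symm
        calc (1 - s) • x - x = (1 - s) • x - (1:ℝ) • x := by rw [← h2]
          _ = ((1 - s) - 1) • x := (sub_smul _ _ _).symm
          _ = (-s) • x := by norm_num
      rw [h1, norm_smul, Real.norm_eq_abs, abs_neg, abs_of_nonneg hs0.le]
      calc s * ‖x‖ ≤ s * 1 := mul_le_mul_of_nonneg_left hx hs0.le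
        _ = s := by ring
    have hd3 : ‖Δ ((1 - s) • y) - Δ y‖ ≤ s := by
      rw [hiso _ (hmem _ (by have := hshr y hy; linarith)) _ (hmem y hy)]
      have h1 : (1 - s) • y - y = (-s) • y := by
        have h2 : y = (1:ℝ) • y := (one_smul ℝ y).symm
        calc (1 - s) • y - y = (1 - s) • y - (1:ℝ) • y := by rw [← h2]
          _ = ((1 - s) - 1) • y := (sub_smul _ _ _).symm
          _ = (-s) • y := by norm_num
      rw [h1, norm_smul, Real.norm_eq_abs, abs_neg, abs_of_nonneg hs0.le]
      calc s * ‖y‖ ≤ s * 1 := mul_le_mul_of_nonneg_left hy hs0.le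
        _ = s := by ring
    have hsplit : Δ p - (Δ x + t • (Δ y - Δ x))
        = (Δ p - Δ ((1 - s) • p))
          + ((1 - t) • (Δ ((1 - s) • x) - Δ x) + t • (Δ ((1 - s) • y) - Δ y)) := by
      rw [haff]
      simp only [smul_sub, sub_smul, one_smul]
      abel
    rw [hsplit]
    have hb2 : ‖(1 - t) • (Δ ((1 - s) • x) - Δ x) + t • (Δ ((1 - s) • y) - Δ y)‖
        ≤ (1 - t) * s + t * s := by
      calc ‖(1 - t) • (Δ ((1 - s) • x) - Δ x) + t • (Δ ((1 - s) • y) - Δ y)‖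
          ≤ ‖(1 - t) • (Δ ((1 - s) • x) - Δ x)‖ + ‖t • (Δ ((1 - s) • y) - Δ y)‖ :=
            norm_add_le _ _
        _ = (1 - t) * ‖Δ ((1 - s) • x) - Δ x‖ + t * ‖Δ ((1 - s) • y) - Δ y‖ := by
            rw [norm_smul, norm_smul, Real.norm_eq_abs, Real.norm_eq_abs,
              abs_of_nonneg (by linarith : (0:ℝ) ≤ 1 - t), abs_of_nonneg ht0]
        _ ≤ (1 - t) * s + t * s := by
            apply add_le_add
            · exact mul_le_mul_of_nonneg_left hd2 (by linarith)
            · exact mul_le_mul_of_nonneg_left hd3 ht0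
    calc ‖(Δ p - Δ ((1 - s) • p))
          + ((1 - t) • (Δ ((1 - s) • x) - Δ x) + t • (Δ ((1 - s) • y) - Δ y))‖
        ≤ ‖Δ p - Δ ((1 - s) • p)‖
          + ‖(1 - t) • (Δ ((1 - s) • x) - Δ x) + t • (Δ ((1 - s) • y) - Δ y)‖ :=
          norm_add_le _ _
      _ ≤ s + ((1 - t) * s + t * s) := add_le_add hd1 hb2
      _ = 2 * s := by ring
      _ ≤ 4 * s := by linarith
  have hzero : ‖Δ p - (Δ x + t • (Δ y - Δ x))‖ = 0 := by
    by_contra hne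
    have hpos : 0 < ‖Δ p - (Δ x + t • (Δ y - Δ x))‖ :=
      lt_of_le_of_ne (norm_nonneg _) (Ne.symm hne)
    set d := ‖Δ p - (Δ x + t • (Δ y - Δ x))‖ with hd
    have hsmall := happrox (min (d/8) 1) (by positivity) (min_le_right _ _)
    have h1 : 4 * min (d/8) 1 ≤ 4 * (d/8) :=
      mul_le_mul_of_nonneg_left (min_le_left _ _) (by norm_num)
    have : d ≤ d / 2 := by
      calc d ≤ 4 * min (d/8) 1 := hsmall
        _ ≤ 4 * (d/8) := h1
        _ = d / 2 := by ring
    linarith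
  exact sub_eq_zero.mp (norm_eq_zero.mp hzero)

end WithMap3

end SMK

/-- the closed unit ball of `B(H)` for a complex Hilbert space `H`
satisfies the strong Mankiewicz property. -/
theorem strong_mankiewicz_unitBall_operators
    {H : Type*} [NormedAddCommGroup H] [InnerProductSpace ℂ H] [CompleteSpace H]
    {Y : Type*} [NormedAddCommGroup Y] [NormedSpace ℝ Y]
    (L : Set Y) (hL : Convex ℝ L)
    (Δ : (H →L[ℂ] H) → Y)
    (hmap : Set.MapsTo Δ (Metric.closedBall (0 : H →L[ℂ] H) 1) L)
    (hsurj : Set.SurjOn Δ (Metric.closedBall (0 : H →L[ℂ] H) 1) L)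
    (hiso : ∀ x ∈ Metric.closedBall (0 : H →L[ℂ] H) 1,
      ∀ y ∈ Metric.closedBall (0 : H →L[ℂ] H) 1, ‖Δ x - Δ y‖ = ‖x - y‖) :
    ∀ x ∈ Metric.closedBall (0 : H →L[ℂ] H) 1,
      ∀ y ∈ Metric.closedBall (0 : H →L[ℂ] H) 1, ∀ t : ℝ, 0 ≤ t → t ≤ 1 →
        Δ (t • x + (1 - t) • y) = t • Δ x + (1 - t) • Δ y := by
  intro x hx y hy t ht0 ht1
  rw [Metric.mem_closedBall, dist_zero_right] at hx hy
  have main := smk_full L hL Δ hmap hsurj hiso y x hy hx t ht0 ht1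
  have h1 : y + t • (x - y) = t • x + (1 - t) • y := by
    simp only [smul_sub, sub_smul, one_smul]; abel
  have h2 : Δ y + t • (Δ x - Δ y) = t • Δ x + (1 - t) • Δ y := by
    simp only [smul_sub, sub_smul, one_smul]; abel
  rw [h1] at main
  rw [main]
  exact h2
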